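/- arXiv:2504.20634 — 6 statements merged into one kernel-verified Lean document; each statement's English description precedes it below -/
import Mathlib

section
/- For every natural number N ≥ 1, the bias of SRFF with N random bits on uniformly distributed real inputs equals -2^{-(N+1)}; precisely, 2^{-N} · Σ_{n=0}^{2^N - 1} (∫₀¹ 𝟙[x + n·2^{-N} ≥ 1] dx) - 1/2 = -2^{-(N+1)}. -/
open MeasureTheory Finset

lemma srff_integral (c : ℝ) (hc0 : 0 ≤ c) (hc1 : c ≤ 1) :
    (∫ x in (0:ℝ)..1, (if x + c ≥ 1 then (1:ℝ) else 0)) = c := by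
  have hfun : (fun x : ℝ => if x + c ≥ 1 then (1:ℝ) else 0)
      = Set.indicator (Set.Ici (1 - c)) (fun _ => (1:ℝ)) := by
    funext x
    simp only [Set.indicator, Set.mem_Ici]
    congr 1
    simp only [ge_iff_le, eq_iff_iff]
    constructor <;> intro h <;> linarith
  rw [intervalIntegral.integral_of_le (by norm_num), hfun,
    MeasureTheory.setIntegral_indicator measurableSet_Ici,
    MeasureTheory.setIntegral_const]
  have hvol : volume (Set.Ioc (0:ℝ) 1 ∩ Set.Ici (1 - c)) = ENNReal.ofReal c := by
    by_cases h : c = 1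
    · subst h
      have : Set.Ioc (0:ℝ) 1 ∩ Set.Ici (1 - 1) = Set.Ioc 0 1 := by
        ext x; simp only [Set.mem_inter_iff, Set.mem_Ioc, Set.mem_Ici]
        constructor
        · rintro ⟨h1, _⟩; exact h1
        · intro h1; exact ⟨h1, by linarith [h1.1]⟩
      rw [this, Real.volume_Ioc]; norm_num
    · have hc1' : c < 1 := lt_of_le_of_ne hc1 h
      have : Set.Ioc (0:ℝ) 1 ∩ Set.Ici (1 - c) = Set.Icc (1 - c) 1 := by
        ext x; simp only [Set.mem_inter_iff, Set.mem_Ioc, Set.mem_Ici, Set.mem_Icc]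
        constructor
        · rintro ⟨⟨_, h2⟩, h3⟩; exact ⟨h3, h2⟩
        · rintro ⟨h1, h2⟩; exact ⟨⟨by linarith, h2⟩, h1⟩
      rw [this, Real.volume_Icc]; ring_nf
  rw [measureReal_def, hvol, ENNReal.toReal_ofReal hc0, smul_eq_mul, mul_one]

theorem srff_bias_infinite_inputs (N : ℕ) (hN : 1 ≤ N) :
    ((2:ℝ)^N)⁻¹ *
      (∑ n ∈ Finset.range (2^N),
        (∫ x in (0:ℝ)..1, (if x + (n:ℝ) * ((2:ℝ)^N)⁻¹ ≥ 1 then (1:ℝ) else 0)))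
      - 1/2 = -((2:ℝ)^(N+1))⁻¹ := by
  have h2 : (0:ℝ) < 2 ^ N := by positivity
  have hsum : (∑ n ∈ Finset.range (2^N),
        (∫ x in (0:ℝ)..1, (if x + (n:ℝ) * ((2:ℝ)^N)⁻¹ ≥ 1 then (1:ℝ) else 0)))
      = ∑ n ∈ Finset.range (2^N), (n:ℝ) * ((2:ℝ)^N)⁻¹ := by
    refine Finset.sum_congr rfl fun n hn => ?_
    have hn' : (n:ℝ) < 2 ^ N := by
      have h := Finset.mem_range.mp hn
      calc (n:ℝ) < ((2^N : ℕ) : ℝ) := by exact_mod_cast h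
        _ = 2 ^ N := by push_cast; ring
    exact srff_integral _ (by positivity) (by
      rw [mul_inv_le_iff₀ h2, one_mul]; exact le_of_lt hn')
  rw [hsum, ← Finset.sum_mul]
  have hT : (∑ n ∈ Finset.range (2^N), (n:ℝ)) * 2 = (2:ℝ)^N * ((2:ℝ)^N - 1) := by
    have h := Finset.sum_range_id_mul_two (2^N)
    have := congrArg (Nat.cast : ℕ → ℝ) h
    push_cast [Nat.cast_sub (Nat.one_le_two_pow : 1 ≤ 2^N)] at this
    convert this using 2 <;> push_cast <;> ring
  have hT' : (∑ n ∈ Finset.range (2^N), (n:ℝ)) = ((2:ℝ)^N * ((2:ℝ)^N - 1)) / 2 := by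
    linarith
  rw [hT']
  have h2' : ((2:ℝ)^N) ≠ 0 := ne_of_gt h2
  field_simp
  ring
end

section
/- For every natural number N ≥ 1, SRF with N random bits is unbiased on uniformly distributed real inputs; precisely, 2^{-N} · Σ_{n=0}^{2^N - 1} (∫₀¹ 𝟙[x + (n + 1/2)·2^{-N} ≥ 1] dx) - 1/2 = 0. -/
open MeasureTheory Finset

lemma srf_key_integral (c : ℝ) (h0 : 0 ≤ c) (h1 : c ≤ 1) :
    (∫ x in (0:ℝ)..1, (if x + c ≥ 1 then (1:ℝ) else 0)) = c := by
  have ha : (1 - c) ∈ Set.Icc (0:ℝ) 1 := ⟨by linarith, by linarith⟩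
  have hind : IntervalIntegrable
      (Set.indicator {x : ℝ | x ≤ 1 - c} (fun _ => (1:ℝ))) volume 0 1 := by
    rw [intervalIntegrable_iff]
    exact (integrableOn_const measure_Ioc_lt_top.ne).indicator measurableSet_Iic
  have hcongr :
      (∫ x in (0:ℝ)..1, (if x + c ≥ 1 then (1:ℝ) else 0)) =
      ∫ x in (0:ℝ)..1,
        (1 - Set.indicator {x : ℝ | x ≤ 1 - c} (fun _ => (1:ℝ)) x) := by
    apply intervalIntegral.integral_congr_ae
    have hz : (volume : Measure ℝ) {(1 - c)} = 0 := measure_singleton _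
    filter_upwards [measure_eq_zero_iff_ae_notMem.mp hz] with x hx _
    simp only [Set.mem_singleton_iff] at hx
    by_cases h : x + c ≥ 1
    · have : ¬ x ≤ 1 - c := by
        rcases lt_or_eq_of_le (by linarith : 1 - c ≤ x) with h' | h'
        · linarith
        · exact absurd h'.symm hx
      simp [h, Set.indicator_of_notMem, this]
    · have : x ≤ 1 - c := by push_neg at h; linarith
      simp [h, Set.indicator_of_mem, this]
  rw [hcongr, intervalIntegral.integral_sub intervalIntegrable_const hind,
    intervalIntegral.integral_const]
  have : (∫ x in (0:ℝ)..1,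
      Set.indicator {x : ℝ | x ≤ 1 - c} (fun _ => (1:ℝ)) x) = 1 - c := by
    rw [intervalIntegral.integral_indicator ha, intervalIntegral.integral_const]
    simp
  rw [this]
  simp

theorem srf_unbiased_infinite_inputs (N : ℕ) (hN : 1 ≤ N) :
    ((2:ℝ)^N)⁻¹ *
      (∑ n ∈ Finset.range (2^N),
        (∫ x in (0:ℝ)..1, (if x + ((n:ℝ) + 1/2) * ((2:ℝ)^N)⁻¹ ≥ 1 then (1:ℝ) else 0)))
      - 1/2 = 0 := by
  have hpow : (0:ℝ) < 2^N := by positivity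
  have hcast : ((2^N : ℕ) : ℝ) = 2^N := by push_cast; ring
  have hsum : (∑ n ∈ Finset.range (2^N),
        (∫ x in (0:ℝ)..1, (if x + ((n:ℝ) + 1/2) * ((2:ℝ)^N)⁻¹ ≥ 1 then (1:ℝ) else 0)))
      = ∑ n ∈ Finset.range (2^N), ((n:ℝ) + 1/2) * ((2:ℝ)^N)⁻¹ := by
    apply Finset.sum_congr rfl
    intro n hn
    have hn' : (n:ℝ) ≤ 2^N - 1 := by
      have h := Finset.mem_range.mp hn
      have : ((n:ℝ)) + 1 ≤ 2^N := by exact_mod_cast h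
      linarith
    apply srf_key_integral
    · positivity
    · rw [inv_eq_one_div, mul_one_div, div_le_one hpow]
      linarith
  have hgauss : ∀ m : ℕ, ∑ i ∈ Finset.range m, ((i:ℝ)) = m * (m - 1) / 2 := by
    intro m
    induction m with
    | zero => simp
    | succ k ih =>
      rw [Finset.sum_range_succ, ih]
      push_cast
      ring
  rw [hsum, ← Finset.sum_mul, Finset.sum_add_distrib, hgauss, Finset.sum_const,
    Finset.card_range, nsmul_eq_mul, hcast]
  field_simp
  ring
end

section
/- For natural numbers N, D ≥ 1, the bias of SRFF with N random bits on inputs uniformly distributed over the grid {i·2^{-D} : i = 0,...,2^D - 1} equals 2^{-N} · Σ_{n=0}^{2^N-1} 2^{-D} · ⌊2^{D-N} n⌋ - (1 - 2^{-D})/2, and this quantity is at most (2^{-D} - 2^{-N})/2. -/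
open Finset

lemma srff_count (N D n : ℕ) (hn : n < 2^N) :
    (∑ i ∈ Finset.range (2^D),
      (if (i:ℝ) * ((2:ℝ)^D)⁻¹ + (n:ℝ) * ((2:ℝ)^N)⁻¹ ≥ 1 then (1:ℝ) else 0))
    = (⌊(2:ℝ)^D / (2:ℝ)^N * (n:ℝ)⌋ : ℝ) := by
  have h2D : (0:ℝ) < 2^D := by positivity
  have h2N : (0:ℝ) < 2^N := by positivity
  set x : ℝ := (2:ℝ)^D / (2:ℝ)^N * (n:ℝ) with hx
  have hx0 : 0 ≤ x := by positivity
  have hxeq : x = (2:ℝ)^D * n / 2^N := by rw [hx]; ring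
  have hnR : (n:ℝ) < 2^N := by exact_mod_cast hn
  have hxlt : x < 2^D := by
    rw [hxeq, div_lt_iff₀ h2N]
    nlinarith
  have hk0 : 0 ≤ ⌊x⌋ := Int.floor_nonneg.mpr hx0
  set M : ℕ := 2^D with hMdef
  have hMcast : ((M:ℝ)) = (2:ℝ)^D := by push_cast [hMdef]; ring
  have hklt : ⌊x⌋ < (M:ℤ) := by
    have : (⌊x⌋ : ℝ) < (M:ℝ) := by rw [hMcast]; exact lt_of_le_of_lt (Int.floor_le x) hxlt
    exact_mod_cast this
  set k : ℕ := ⌊x⌋.toNat with hkdef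
  have hkZ : (k : ℤ) = ⌊x⌋ := Int.toNat_of_nonneg hk0
  have hkcast : (k : ℝ) = (⌊x⌋ : ℝ) := by exact_mod_cast hkZ
  have hkle : k ≤ M := by omega
  have hcond : ∀ i : ℕ, ((i:ℝ) * ((2:ℝ)^D)⁻¹ + (n:ℝ) * ((2:ℝ)^N)⁻¹ ≥ 1) ↔ (M - k ≤ i) := by
    intro i
    have e1 : (i:ℝ) * ((2:ℝ)^D)⁻¹ + (n:ℝ) * ((2:ℝ)^N)⁻¹
        = ((i:ℝ)*2^N + (n:ℝ)*2^D) / ((2:ℝ)^D*2^N) := by field_simp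
    have h1 : ((i:ℝ) * ((2:ℝ)^D)⁻¹ + (n:ℝ) * ((2:ℝ)^N)⁻¹ ≥ 1)
        ↔ ((2:ℝ)^D - (i:ℝ) ≤ x) := by
      rw [ge_iff_le, e1, le_div_iff₀ (by positivity), one_mul, hxeq,
        le_div_iff₀ h2N]
      constructor <;> intro h <;> nlinarith
    rw [h1]
    have h2 : ((2:ℝ)^D - (i:ℝ) ≤ x) ↔ ((M : ℤ) - (i:ℤ) ≤ ⌊x⌋) := by
      rw [Int.le_floor]
      push_cast
      rw [hMcast]
    rw [h2, ← hkZ]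
    omega
  have hstep : ∑ i ∈ Finset.range M,
      (if (i:ℝ) * ((2:ℝ)^D)⁻¹ + (n:ℝ) * ((2:ℝ)^N)⁻¹ ≥ 1 then (1:ℝ) else 0)
      = ∑ i ∈ Finset.range M, (if M - k ≤ i then (1:ℝ) else 0) := by
    apply Finset.sum_congr rfl
    intro i _
    simp [hcond i]
  rw [hstep, Finset.sum_boole]
  have hfilter : Finset.filter (fun i => M - k ≤ i) (Finset.range M)
      = Finset.Ico (M - k) M := by
    ext i
    simp only [Finset.mem_filter, Finset.mem_range, Finset.mem_Ico]
    tauto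
  rw [hfilter, Nat.card_Ico, Nat.sub_sub_self hkle, hkcast]

theorem srff_grid_bias (N D : ℕ) (hN : 1 ≤ N) (hD : 1 ≤ D) :
    (((2:ℝ)^D)⁻¹ * ∑ i ∈ Finset.range (2^D),
        (((2:ℝ)^N)⁻¹ * ∑ n ∈ Finset.range (2^N),
            (if (i:ℝ) * ((2:ℝ)^D)⁻¹ + (n:ℝ) * ((2:ℝ)^N)⁻¹ ≥ 1 then (1:ℝ) else 0)
          - (i:ℝ) * ((2:ℝ)^D)⁻¹)
      = ((2:ℝ)^N)⁻¹ * ∑ n ∈ Finset.range (2^N),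
          ((2:ℝ)^D)⁻¹ * (⌊(2:ℝ)^D / (2:ℝ)^N * (n:ℝ)⌋ : ℝ)
        - (1 - ((2:ℝ)^D)⁻¹)/2)
    ∧
    (((2:ℝ)^D)⁻¹ * ∑ i ∈ Finset.range (2^D),
        (((2:ℝ)^N)⁻¹ * ∑ n ∈ Finset.range (2^N),
            (if (i:ℝ) * ((2:ℝ)^D)⁻¹ + (n:ℝ) * ((2:ℝ)^N)⁻¹ ≥ 1 then (1:ℝ) else 0)
          - (i:ℝ) * ((2:ℝ)^D)⁻¹)
      ≤ (((2:ℝ)^D)⁻¹ - ((2:ℝ)^N)⁻¹)/2) := by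
  have h2D : (0:ℝ) < 2^D := by positivity
  have h2N : (0:ℝ) < 2^N := by positivity
  set T : ℝ := ∑ n ∈ Finset.range (2^N), (⌊(2:ℝ)^D / (2:ℝ)^N * (n:ℝ)⌋ : ℝ) with hT
  have hgauss : ∀ m : ℕ, 1 ≤ m → (∑ i ∈ Finset.range m, (i:ℝ)) = (m:ℝ)*((m:ℝ)-1)/2 := by
    intro m hm
    have h := Finset.sum_range_id_mul_two m
    have h2 : ((∑ i ∈ Finset.range m, i : ℕ) : ℝ) * 2 = (m:ℝ) * ((m:ℝ) - 1) := by
      have h3 : ((m * (m-1) : ℕ) : ℝ) = (m:ℝ) * ((m:ℝ) - 1) := by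
        push_cast [Nat.cast_sub hm]; ring
      rw [← h3]; exact_mod_cast congrArg (Nat.cast : ℕ → ℝ) h
    push_cast at h2 ⊢
    linarith
  have hGD := hgauss (2^D) Nat.one_le_two_pow
  have hGN := hgauss (2^N) Nat.one_le_two_pow
  push_cast at hGD hGN
  have hlhs : (((2:ℝ)^D)⁻¹ * ∑ i ∈ Finset.range (2^D),
        (((2:ℝ)^N)⁻¹ * ∑ n ∈ Finset.range (2^N),
            (if (i:ℝ) * ((2:ℝ)^D)⁻¹ + (n:ℝ) * ((2:ℝ)^N)⁻¹ ≥ 1 then (1:ℝ) else 0)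
          - (i:ℝ) * ((2:ℝ)^D)⁻¹))
      = ((2:ℝ)^D)⁻¹ * (((2:ℝ)^N)⁻¹ * T - ((2:ℝ)^D)⁻¹ * ((2:ℝ)^D * ((2:ℝ)^D - 1)/2)) := by
    congr 1
    rw [Finset.sum_sub_distrib, ← Finset.mul_sum, Finset.sum_comm]
    have hS : ∑ n ∈ Finset.range (2^N), ∑ i ∈ Finset.range (2^D),
        (if (i:ℝ) * ((2:ℝ)^D)⁻¹ + (n:ℝ) * ((2:ℝ)^N)⁻¹ ≥ 1 then (1:ℝ) else 0) = T := by
      apply Finset.sum_congr rfl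
      intro n hn
      exact srff_count N D n (Finset.mem_range.mp hn)
    rw [hS, ← Finset.sum_mul, hGD]
    ring
  have hrhsT : (∑ n ∈ Finset.range (2^N),
          ((2:ℝ)^D)⁻¹ * (⌊(2:ℝ)^D / (2:ℝ)^N * (n:ℝ)⌋ : ℝ)) = ((2:ℝ)^D)⁻¹ * T := by
    rw [hT, Finset.mul_sum]
  have hTbound : T ≤ (2:ℝ)^D * ((2:ℝ)^N - 1) / 2 := by
    have hle : T ≤ ∑ n ∈ Finset.range (2^N), (2:ℝ)^D / (2:ℝ)^N * (n:ℝ) :=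
      Finset.sum_le_sum fun n _ => Int.floor_le _
    calc T ≤ ∑ n ∈ Finset.range (2^N), (2:ℝ)^D / (2:ℝ)^N * (n:ℝ) := hle
    _ = (2:ℝ)^D / (2:ℝ)^N * ((2:ℝ)^N * ((2:ℝ)^N - 1)/2) := by
        rw [← Finset.mul_sum, hGN]
    _ = (2:ℝ)^D * ((2:ℝ)^N - 1) / 2 := by field_simp
  constructor
  · rw [hlhs, hrhsT]
    field_simp
  · rw [hlhs]
    have key : ((2:ℝ)^D)⁻¹ * (((2:ℝ)^N)⁻¹ * T) ≤ (1 - ((2:ℝ)^N)⁻¹)/2 := by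
      have h1 : ((2:ℝ)^D)⁻¹ * (((2:ℝ)^N)⁻¹ * T)
          ≤ ((2:ℝ)^D)⁻¹ * (((2:ℝ)^N)⁻¹ * ((2:ℝ)^D * ((2:ℝ)^N - 1) / 2)) := by
        apply mul_le_mul_of_nonneg_left _ (by positivity)
        exact mul_le_mul_of_nonneg_left hTbound (by positivity)
      have h2 : ((2:ℝ)^D)⁻¹ * (((2:ℝ)^N)⁻¹ * ((2:ℝ)^D * ((2:ℝ)^N - 1) / 2))
          = (1 - ((2:ℝ)^N)⁻¹)/2 := by field_simp
      linarith
    have h3 : ((2:ℝ)^D)⁻¹ * (((2:ℝ)^D)⁻¹ * ((2:ℝ)^D * ((2:ℝ)^D - 1)/2))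
        = (1 - ((2:ℝ)^D)⁻¹)/2 := by field_simp
    rw [mul_sub, ← mul_assoc, ← mul_assoc] at *
    nlinarith [key]
end

section
/- If N ≤ D (both natural numbers ≥ 1), then the bias of SRFF with N random bits on the grid {i·2^{-D} : i = 0,...,2^D-1} equals exactly (2^{-D} - 2^{-N})/2. In particular, SRFF is unbiased on this grid if and only if the bound is zero, which holds when N = D. -/
open Finset

theorem srff_grid_bias_exact (N D : ℕ) (hN : 1 ≤ N) (hD : 1 ≤ D) (hND : N ≤ D) :
    (((2:ℝ)^D)⁻¹ * ∑ i ∈ Finset.range (2^D),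
        (((2:ℝ)^N)⁻¹ * ∑ n ∈ Finset.range (2^N),
            (if (i:ℝ) * ((2:ℝ)^D)⁻¹ + (n:ℝ) * ((2:ℝ)^N)⁻¹ ≥ 1 then (1:ℝ) else 0)
          - (i:ℝ) * ((2:ℝ)^D)⁻¹)
      = (((2:ℝ)^D)⁻¹ - ((2:ℝ)^N)⁻¹)/2)
    ∧
    ((((2:ℝ)^D)⁻¹ * ∑ i ∈ Finset.range (2^D),
        (((2:ℝ)^N)⁻¹ * ∑ n ∈ Finset.range (2^N),
            (if (i:ℝ) * ((2:ℝ)^D)⁻¹ + (n:ℝ) * ((2:ℝ)^N)⁻¹ ≥ 1 then (1:ℝ) else 0)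
          - (i:ℝ) * ((2:ℝ)^D)⁻¹) = 0) ↔ N = D) := by
  set M := D - N with hMdef
  have hDM : M + N = D := Nat.sub_add_cancel hND
  have h2D : (0:ℝ) < 2^D := by positivity
  have h2N : (0:ℝ) < 2^N := by positivity
  have hpow : (2:ℝ)^D = 2^M * 2^N := by rw [← pow_add, hDM]
  have hpowN : (2:ℕ)^D = 2^M * 2^N := by rw [← pow_add, hDM]
  -- key: for n < 2^N, the count of i with indicator true equals n * 2^M
  have key : ∀ n ∈ Finset.range (2^N),
      (∑ i ∈ Finset.range (2^D),
        (if (i:ℝ) * ((2:ℝ)^D)⁻¹ + (n:ℝ) * ((2:ℝ)^N)⁻¹ ≥ 1 then (1:ℝ) else 0))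
      = (n:ℝ) * 2^M := by
    intro n hn
    rw [Finset.mem_range] at hn
    have hnM : n * 2^M ≤ 2^D := by
      rw [hpowN, mul_comm (2^M) (2^N)]
      exact Nat.mul_le_mul_right _ (le_of_lt hn)
    have hcond : ∀ i : ℕ, ((i:ℝ) * ((2:ℝ)^D)⁻¹ + (n:ℝ) * ((2:ℝ)^N)⁻¹ ≥ 1)
        ↔ (2^D ≤ i + n * 2^M) := by
      intro i
      have heq : (i:ℝ) * ((2:ℝ)^D)⁻¹ + (n:ℝ) * ((2:ℝ)^N)⁻¹
          = ((i:ℝ) + (n:ℝ) * 2^M) / 2^D := by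
        rw [hpow]; field_simp
      rw [heq, ge_iff_le, le_div_iff₀ h2D, one_mul]
      constructor
      · intro h
        have : ((2:ℕ)^D : ℝ) ≤ ((i + n * 2^M : ℕ) : ℝ) := by push_cast; linarith
        exact_mod_cast this
      · intro h
        have : ((2:ℕ)^D : ℝ) ≤ ((i + n * 2^M : ℕ) : ℝ) := by exact_mod_cast h
        push_cast at this; linarith
    calc (∑ i ∈ Finset.range (2^D),
            (if (i:ℝ) * ((2:ℝ)^D)⁻¹ + (n:ℝ) * ((2:ℝ)^N)⁻¹ ≥ 1 then (1:ℝ) else 0))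
        = ∑ i ∈ Finset.range (2^D), (if 2^D ≤ i + n * 2^M then (1:ℝ) else 0) := by
          refine Finset.sum_congr rfl fun i _ => ?_
          simp [hcond i]
      _ = ((Finset.range (2^D)).filter (fun i => 2^D ≤ i + n * 2^M)).card := by
          rw [Finset.sum_boole]
      _ = (n:ℝ) * 2^M := by
          have hfe : (Finset.range (2^D)).filter (fun i => 2^D ≤ i + n * 2^M)
              = Finset.Ico (2^D - n * 2^M) (2^D) := by
            ext i
            simp only [Finset.mem_filter, Finset.mem_range, Finset.mem_Ico]
            omega
          rw [hfe, Nat.card_Ico]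
          have : 2^D - (2^D - n * 2^M) = n * 2^M := by omega
          rw [this]; push_cast; ring
  -- Gauss sums
  have gaussN : (∑ n ∈ Finset.range (2^N), (n:ℝ))
      = (2^N : ℝ) * ((2^N : ℝ) - 1) / 2 := by
    have hc := congrArg (Nat.cast : ℕ → ℝ) (Finset.sum_range_id_mul_two (2^N))
    push_cast [Nat.cast_sub (Nat.one_le_two_pow)] at hc
    push_cast
    linarith
  have gaussD : (∑ i ∈ Finset.range (2^D), (i:ℝ))
      = (2^D : ℝ) * ((2^D : ℝ) - 1) / 2 := by
    have hc := congrArg (Nat.cast : ℕ → ℝ) (Finset.sum_range_id_mul_two (2^D))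
    push_cast [Nat.cast_sub (Nat.one_le_two_pow)] at hc
    push_cast
    linarith
  have main : ((2:ℝ)^D)⁻¹ * ∑ i ∈ Finset.range (2^D),
        (((2:ℝ)^N)⁻¹ * ∑ n ∈ Finset.range (2^N),
            (if (i:ℝ) * ((2:ℝ)^D)⁻¹ + (n:ℝ) * ((2:ℝ)^N)⁻¹ ≥ 1 then (1:ℝ) else 0)
          - (i:ℝ) * ((2:ℝ)^D)⁻¹)
      = (((2:ℝ)^D)⁻¹ - ((2:ℝ)^N)⁻¹)/2 := by
    rw [Finset.sum_sub_distrib, ← Finset.mul_sum, Finset.sum_comm]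
    rw [Finset.sum_congr rfl key]
    have hsum2 : (∑ i ∈ Finset.range (2^D), (i:ℝ) * ((2:ℝ)^D)⁻¹)
        = (∑ i ∈ Finset.range (2^D), (i:ℝ)) * ((2:ℝ)^D)⁻¹ := by
      rw [Finset.sum_mul]
    have hsum1 : (∑ n ∈ Finset.range (2^N), (n:ℝ) * 2^M)
        = (∑ n ∈ Finset.range (2^N), (n:ℝ)) * 2^M := by
      rw [Finset.sum_mul]
    rw [hsum2, hsum1, gaussN, gaussD, hpow]
    field_simp
    ring
  refine ⟨main, ?_⟩
  rw [main]
  constructor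
  · intro h
    have h2 : ((2:ℝ)^D)⁻¹ = ((2:ℝ)^N)⁻¹ := by linarith
    rw [inv_inj] at h2
    have h3 : (2:ℕ)^D = 2^N := by exact_mod_cast h2
    exact (Nat.pow_right_injective (le_refl 2) h3).symm
  · intro h
    subst h
    ring
end

section
/- For natural numbers N, D ≥ 1, the bias of SRF with N random bits on the grid with D excess bits satisfies bias_{SRF,D} ≤ 2^{-(D+1)}. -/
open Finset

private lemma srf_count_ge (K c : ℕ) :
    ∑ n ∈ Finset.range K, (if c ≤ n then (1:ℝ) else 0) = ((K - c : ℕ) : ℝ) := by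
  have h : (Finset.range K).filter (fun n => c ≤ n) = Finset.Ico c K := by
    ext a
    simp only [Finset.mem_filter, Finset.mem_range, Finset.mem_Ico]
    omega
  rw [Finset.sum_boole, h, Nat.card_Ico]

private lemma srf_cond_iff (N D i c : ℕ)
    (h1 : (c:ℝ) - 1 < (1 - (i:ℝ) * ((2:ℝ)^D)⁻¹) * 2^N - 1/2)
    (h2 : (1 - (i:ℝ) * ((2:ℝ)^D)⁻¹) * 2^N - 1/2 ≤ c) (n : ℕ) :
    ((i:ℝ) * ((2:ℝ)^D)⁻¹ + ((n:ℝ) + 1/2) * ((2:ℝ)^N)⁻¹ ≥ 1) ↔ c ≤ n := by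
  have h2N : (0:ℝ) < 2^N := by positivity
  rw [ge_iff_le,
      show ((n:ℝ)+1/2) * ((2:ℝ)^N)⁻¹ = ((n:ℝ)+1/2)/2^N from (div_eq_mul_inv _ _).symm,
      ← sub_le_iff_le_add', le_div_iff₀ h2N, ← sub_le_iff_le_add]
  constructor
  · intro h
    have hc : (c:ℝ) < (n:ℝ) + 1 := by linarith
    have : c < n + 1 := by exact_mod_cast hc
    omega
  · intro h
    have : (c:ℝ) ≤ n := by exact_mod_cast h
    linarith

private lemma srf_sum_mod (P Q : ℕ) (g : ℕ → ℝ) :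
    ∑ i ∈ Finset.range (Q * P), g (i % P) = Q * ∑ r ∈ Finset.range P, g r := by
  induction Q with
  | zero => simp
  | succ k ih =>
    have h : (k + 1) * P = k * P + P := by ring
    rw [h, Finset.sum_range_add, ih]
    have h2 : ∀ x ∈ Finset.range P, g ((k * P + x) % P) = g x := by
      intro x hx
      rw [Nat.add_comm, Nat.add_mul_mod_self_right, Nat.mod_eq_of_lt (Finset.mem_range.mp hx)]
    rw [Finset.sum_congr rfl h2]
    push_cast
    ring

theorem srf_grid_bias_bound (N D : ℕ) (hN : 1 ≤ N) (hD : 1 ≤ D) :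
    ((2:ℝ)^D)⁻¹ * ∑ i ∈ Finset.range (2^D),
        (((2:ℝ)^N)⁻¹ * ∑ n ∈ Finset.range (2^N),
            (if (i:ℝ) * ((2:ℝ)^D)⁻¹ + ((n:ℝ) + 1/2) * ((2:ℝ)^N)⁻¹ ≥ 1 then (1:ℝ) else 0)
          - (i:ℝ) * ((2:ℝ)^D)⁻¹)
      ≤ ((2:ℝ)^(D+1))⁻¹ := by
  have h2D : (0:ℝ) < 2^D := by positivity
  have h2N : (0:ℝ) < 2^N := by positivity
  by_cases hND : D ≤ N
  · -- every inner term is zero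
    have hzero : ∀ i ∈ Finset.range (2^D),
        (((2:ℝ)^N)⁻¹ * ∑ n ∈ Finset.range (2^N),
            (if (i:ℝ) * ((2:ℝ)^D)⁻¹ + ((n:ℝ) + 1/2) * ((2:ℝ)^N)⁻¹ ≥ 1 then (1:ℝ) else 0)
          - (i:ℝ) * ((2:ℝ)^D)⁻¹) = 0 := by
      intro i hi
      have hi' : i < 2^D := Finset.mem_range.mp hi
      set e := 2^(N-D) with he
      have hpow : 2^D * e = 2^N := by
        rw [he, ← pow_add]
        congr 1
        omega
      have he1 : 1 ≤ e := Nat.one_le_two_pow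
      have hie : i * e + e ≤ 2^N := by
        calc i * e + e = (i+1) * e := by ring
        _ ≤ 2^D * e := Nat.mul_le_mul_right e hi'
        _ = 2^N := hpow
      have hpowR : (2:ℝ)^D * ((e:ℕ):ℝ) = (2:ℝ)^N := by exact_mod_cast congrArg (Nat.cast : ℕ → ℝ) hpow
      set c := 2^N - i * e with hc
      have hcR : (c:ℝ) = (2:ℝ)^N - (i:ℝ) * e := by
        rw [hc, Nat.cast_sub (by omega : i * e ≤ 2^N)]
        push_cast
        ring
      have ht : (1 - (i:ℝ) * ((2:ℝ)^D)⁻¹) * 2^N - 1/2 = (c:ℝ) - 1/2 := by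
        rw [hcR]
        field_simp
        nlinarith [hpowR]
      have hiff := srf_cond_iff N D i c (by rw [ht]; norm_num) (by rw [ht]; norm_num)
      rw [Finset.sum_congr rfl (fun n _ => if_congr (hiff n) rfl rfl), srf_count_ge]
      have hval : ((2^N - c : ℕ) : ℝ) = (i:ℝ) * e := by
        have h' : 2^N - c = i * e := by omega
        rw [h']
        push_cast
        ring
      rw [hval]
      field_simp
      nlinarith [hpowR]
    rw [Finset.sum_congr rfl hzero, Finset.sum_const, smul_zero, mul_zero]
    positivity
  · -- N < D : the bias is exactly 2^(-(D+1))
    push_neg at hND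
    set M := D - N with hM
    have hM1 : 1 ≤ M := by omega
    have hpow : 2^N * 2^M = 2^D := by
      rw [← pow_add]
      congr 1
      omega
    have hpowR : (2:ℝ)^M * (2:ℝ)^N = (2:ℝ)^D := by
      rw [← pow_add]
      congr 1
      omega
    have h2M : (0:ℝ) < 2^M := by positivity
    have hMsplitN : 2^M = 2 * 2^(M-1) := by
      rw [← pow_succ']
      congr 1
      omega
    have hMsplit : (2:ℝ)^M = 2 * 2^(M-1) := by
      rw [← pow_succ']
      congr 1
      omega
    set g : ℕ → ℝ := fun r =>
      (if 2^M ≤ 2*r then (1:ℝ) else 0) * ((2:ℝ)^N)⁻¹ - (r:ℝ) * ((2:ℝ)^D)⁻¹ with hg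
    have hterm : ∀ i ∈ Finset.range (2^D),
        (((2:ℝ)^N)⁻¹ * ∑ n ∈ Finset.range (2^N),
            (if (i:ℝ) * ((2:ℝ)^D)⁻¹ + ((n:ℝ) + 1/2) * ((2:ℝ)^N)⁻¹ ≥ 1 then (1:ℝ) else 0)
          - (i:ℝ) * ((2:ℝ)^D)⁻¹) = g (i % 2^M) := by
      intro i hi
      have hi' : i < 2^D := Finset.mem_range.mp hi
      set q := i / 2^M with hq
      set r := i % 2^M with hr
      have hqr : i = q * 2^M + r := by
        rw [hq, hr, Nat.mul_comm]
        exact (Nat.div_add_mod i (2^M)).symm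
      have hrlt : r < 2^M := Nat.mod_lt _ (by positivity)
      have hpow' : 2^M * 2^N = 2^D := by rw [Nat.mul_comm]; exact hpow
      have hqlt : q < 2^N := by
        rw [hq]
        exact Nat.div_lt_of_lt_mul (by omega)
      set ind : ℕ := if 2^M ≤ 2*r then 1 else 0 with hind
      have hindle : ind ≤ 1 := by rw [hind]; split <;> omega
      set c := 2^N - q - ind with hc
      have hcR : (c:ℝ) = (2:ℝ)^N - (q:ℝ) - (ind:ℝ) := by
        rw [hc, Nat.cast_sub (by omega : ind ≤ 2^N - q), Nat.cast_sub (by omega : q ≤ 2^N)]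
        push_cast
        ring
      have hiR : (i:ℝ) = (q:ℝ) * 2^M + (r:ℝ) := by exact_mod_cast congrArg (Nat.cast : ℕ → ℝ) hqr
      have ht : (1 - (i:ℝ) * ((2:ℝ)^D)⁻¹) * 2^N - 1/2
          = (2:ℝ)^N - (q:ℝ) - (r:ℝ) / 2^M - 1/2 := by
        rw [hiR]
        field_simp
        nlinarith [hpowR, h2M, h2N]
      have hrb : (0:ℝ) ≤ (r:ℝ) ∧ (r:ℝ) < (2:ℝ)^M := by
        constructor
        · positivity
        · exact_mod_cast hrlt
      have h1 : (c:ℝ) - 1 < (1 - (i:ℝ) * ((2:ℝ)^D)⁻¹) * 2^N - 1/2 := by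
        rw [ht, hcR, hind]
        split
        · norm_num
          have : (r:ℝ) / 2^M < 1 := by
            rw [div_lt_one h2M]
            exact hrb.2
          linarith
        · rename_i hcon
          norm_num
          have : (2:ℝ) * r < 2^M := by
            exact_mod_cast Nat.lt_of_not_le hcon
          have : (r:ℝ) / 2^M < 1/2 := by
            rw [div_lt_iff₀ h2M]
            linarith
          linarith
      have h2 : (1 - (i:ℝ) * ((2:ℝ)^D)⁻¹) * 2^N - 1/2 ≤ (c:ℝ) := by
        rw [ht, hcR, hind]
        split
        · rename_i hcon
          norm_num
          have : (2:ℝ)^M ≤ 2 * r := by exact_mod_cast hcon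
          have : (1:ℝ)/2 ≤ (r:ℝ) / 2^M := by
            rw [div_le_div_iff₀ (by norm_num) h2M]
            linarith
          linarith
        · norm_num
          have : (0:ℝ) ≤ (r:ℝ) / 2^M := by positivity
          linarith
      have hiff := srf_cond_iff N D i c h1 h2
      rw [Finset.sum_congr rfl (fun n _ => if_congr (hiff n) rfl rfl), srf_count_ge]
      have haux : ∀ (a b B : ℕ), a < B → b ≤ 1 → B - (B - a - b) = a + b := by
        intro a b B u v
        omega
      have hval : ((2^N - c : ℕ) : ℝ) = (q:ℝ) + (ind:ℝ) := by
        rw [hc, haux q ind (2^N) hqlt hindle]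
        push_cast
        ring
      rw [hval]
      simp only [hg, hind]
      have hq0 : (q:ℝ) * ((2:ℝ)^N)⁻¹ = (q:ℝ) * 2^M * ((2:ℝ)^D)⁻¹ := by
        rw [← hpowR]
        field_simp
      by_cases hcase : 2^M ≤ 2*r <;>
        push_cast <;>
        simp only [hcase, if_true, if_false] <;>
        rw [hiR] <;>
        linear_combination hq0
    rw [Finset.sum_congr rfl hterm,
        show (2^D) = 2^N * 2^M from hpow.symm, srf_sum_mod]
    -- compute ∑ r ∈ range (2^M), g r
    have hgsum : ∑ r ∈ Finset.range (2^M), g r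
        = (2:ℝ)^(M-1) * ((2:ℝ)^N)⁻¹
          - (∑ r ∈ Finset.range (2^M), (r:ℝ)) * ((2:ℝ)^D)⁻¹ := by
      simp only [hg]
      rw [Finset.sum_sub_distrib, ← Finset.sum_mul, ← Finset.sum_mul]
      congr 2
      have hc : ∀ x ∈ Finset.range (2^M),
          (if 2^M ≤ 2*x then (1:ℝ) else 0) = (if 2^(M-1) ≤ x then (1:ℝ) else 0) := by
        intro x _
        apply if_congr _ rfl rfl
        omega
      rw [Finset.sum_congr rfl hc, srf_count_ge]
      have : 2^M - 2^(M-1) = 2^(M-1) := by omega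
      rw [this]
      norm_cast
    have hS : (∑ r ∈ Finset.range (2^M), (r:ℝ)) * 2 = (2:ℝ)^M * ((2:ℝ)^M - 1) := by
      have hn : (∑ i ∈ Finset.range (2^M), i) * 2 = 2^M * (2^M - 1) :=
        Finset.sum_range_id_mul_two (2^M)
      have hcast := congrArg (Nat.cast : ℕ → ℝ) hn
      push_cast [Nat.cast_sub (Nat.one_le_two_pow : (1:ℕ) ≤ 2^M)] at hcast
      exact hcast
    have hMne : ((2:ℝ)^M) ≠ 0 := ne_of_gt h2M
    have hNne : ((2:ℝ)^N) ≠ 0 := ne_of_gt h2N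
    have hSP : (∑ r ∈ Finset.range (2^M), (r:ℝ)) * ((2:ℝ)^M)⁻¹ = ((2:ℝ)^M - 1)/2 := by
      rw [eq_div_iff (two_ne_zero)]
      calc (∑ r ∈ Finset.range (2^M), (r:ℝ)) * ((2:ℝ)^M)⁻¹ * 2
          = ((∑ r ∈ Finset.range (2^M), (r:ℝ)) * 2) * ((2:ℝ)^M)⁻¹ := by ring
        _ = ((2:ℝ)^M * ((2:ℝ)^M - 1)) * ((2:ℝ)^M)⁻¹ := by rw [hS]
        _ = ((2:ℝ)^M - 1) * ((2:ℝ)^M * ((2:ℝ)^M)⁻¹) := by ring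
        _ = (2:ℝ)^M - 1 := by rw [mul_inv_cancel₀ hMne, mul_one]
    have hbr : (2:ℝ)^(M-1) * ((2:ℝ)^N)⁻¹
          - (∑ r ∈ Finset.range (2^M), (r:ℝ)) * ((2:ℝ)^D)⁻¹ = ((2:ℝ)^N)⁻¹ / 2 := by
      rw [← hpowR, mul_inv]
      calc (2:ℝ)^(M-1) * ((2:ℝ)^N)⁻¹
            - (∑ r ∈ Finset.range (2^M), (r:ℝ)) * (((2:ℝ)^M)⁻¹ * ((2:ℝ)^N)⁻¹)
          = ((2:ℝ)^(M-1) - (∑ r ∈ Finset.range (2^M), (r:ℝ)) * ((2:ℝ)^M)⁻¹) * ((2:ℝ)^N)⁻¹ := by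
            ring
        _ = ((2:ℝ)^(M-1) - ((2:ℝ)^M - 1)/2) * ((2:ℝ)^N)⁻¹ := by rw [hSP]
        _ = (1/2) * ((2:ℝ)^N)⁻¹ := by
            have : (2:ℝ)^(M-1) - ((2:ℝ)^M - 1)/2 = 1/2 := by
              rw [hMsplit]
              ring
            rw [this]
        _ = ((2:ℝ)^N)⁻¹ / 2 := by ring
    rw [hgsum, hbr]
    apply le_of_eq
    rw [pow_succ, mul_inv]
    push_cast
    calc ((2:ℝ)^D)⁻¹ * ((2:ℝ)^N * (((2:ℝ)^N)⁻¹ / 2))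
        = ((2:ℝ)^D)⁻¹ * (((2:ℝ)^N * ((2:ℝ)^N)⁻¹) / 2) := by ring
      _ = ((2:ℝ)^D)⁻¹ * (2:ℝ)⁻¹ := by rw [mul_inv_cancel₀ hNne]; ring
end

section
/- For natural numbers N, D with N ≤ D, bias_{SRF,D} = 2^{-N} Σ_{n=0}^{2^N-1} 2^{-D}·⌊n·2^{D-N} + 2^{D-N-1}⌋ − (1 − 2^{-D})/2, and when N < D the floors are exact so the expression simplifies to 2^{-(D+1)}. -/
open Finset


lemma srf_aux_filter (c M : ℕ) :
    ((Finset.range M).filter (fun i => c ≤ i)).card = M - c := by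
  have h : (Finset.range M).filter (fun i => c ≤ i) = Finset.Ico c M := by
    ext i
    simp only [Finset.mem_filter, Finset.mem_range, Finset.mem_Ico]
    omega
  rw [h, Nat.card_Ico]

lemma srf_aux_ind_sum (N m n : ℕ) (hn : n < 2^N) :
    ∑ i ∈ Finset.range (2^(N+m)),
      (if (i:ℝ) * ((2:ℝ)^(N+m))⁻¹ + ((n:ℝ) + 1/2) * ((2:ℝ)^N)⁻¹ ≥ 1 then (1:ℝ) else 0)
      = ((n * 2^m + 2^m / 2 : ℕ) : ℝ) := by
  have hKT : n * 2^m + 2^m / 2 ≤ 2^(N+m) := by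
    have h1 : n + 1 ≤ 2^N := hn
    have h2 : (n+1) * 2^m ≤ 2^N * 2^m := Nat.mul_le_mul_right _ h1
    have h3 : 2^m / 2 ≤ 2^m := Nat.div_le_self _ _
    have h4 : 2^(N+m) = 2^N * 2^m := pow_add 2 N m
    nlinarith [h2, h3, h4]
  have hcond : ∀ i : ℕ, ((i:ℝ) * ((2:ℝ)^(N+m))⁻¹ + ((n:ℝ) + 1/2) * ((2:ℝ)^N)⁻¹ ≥ 1)
      ↔ 2^(N+m) - (n * 2^m + 2^m / 2) ≤ i := by
    intro i
    have hA : (0:ℝ) < 2^(N+m) := by positivity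
    have hB : (0:ℝ) < 2^N := by positivity
    have h2 : ((2:ℝ)^N)⁻¹ = 2^m * ((2:ℝ)^(N+m))⁻¹ := by
      rw [pow_add]; field_simp
    rw [h2]
    have hrw : (i:ℝ) * ((2:ℝ)^(N+m))⁻¹ + ((n:ℝ) + 1/2) * ((2:ℝ)^m * ((2:ℝ)^(N+m))⁻¹)
        = ((i:ℝ) + ((n:ℝ)+1/2) * 2^m) / 2^(N+m) := by ring
    rw [hrw, ge_iff_le, one_le_div hA]
    have hq : (2*n+1) * 2^m = 2*(n*2^m) + 2^m := by ring
    have key : ∀ (T p q i : ℕ), p + q/2 ≤ T →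
        ((2*T ≤ 2*i + (2*p + q)) ↔ T - (p + q/2) ≤ i) := by
      intro T p q i h; omega
    have hkey := key (2^(N+m)) (n*2^m) (2^m) i hKT
    rw [← hq] at hkey
    constructor
    · intro h
      have h' : (2:ℝ) * 2^(N+m) ≤ 2*(i:ℕ) + (2*(n:ℕ)+1) * 2^m := by push_cast; nlinarith
      have hc : (2 * 2^(N+m) : ℕ) ≤ 2*i + (2*n+1)*2^m := by exact_mod_cast h'
      exact hkey.mp hc
    · intro h
      have hc : (2 * 2^(N+m) : ℕ) ≤ 2*i + (2*n+1)*2^m := hkey.mpr h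
      have h' : (2:ℝ) * 2^(N+m) ≤ 2*(i:ℕ) + (2*(n:ℕ)+1) * 2^m := by exact_mod_cast hc
      push_cast at h'
      nlinarith
  calc ∑ i ∈ Finset.range (2^(N+m)),
      (if (i:ℝ) * ((2:ℝ)^(N+m))⁻¹ + ((n:ℝ) + 1/2) * ((2:ℝ)^N)⁻¹ ≥ 1 then (1:ℝ) else 0)
      = ∑ i ∈ Finset.range (2^(N+m)),
        (if 2^(N+m) - (n * 2^m + 2^m / 2) ≤ i then (1:ℝ) else 0) := by
        refine Finset.sum_congr rfl fun i _ => ?_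
        exact if_congr (hcond i) rfl rfl
    _ = (((Finset.range (2^(N+m))).filter (fun i => 2^(N+m) - (n * 2^m + 2^m / 2) ≤ i)).card : ℝ) := by
        rw [Finset.sum_boole]
    _ = ((n * 2^m + 2^m / 2 : ℕ) : ℝ) := by
        rw [srf_aux_filter]
        congr 1
        exact Nat.sub_sub_self hKT

lemma srf_aux_floor (N m n : ℕ) :
    ⌊(n:ℝ) * ((2:ℝ)^(N+m) / (2:ℝ)^N) + (2:ℝ)^(N+m) / (2:ℝ)^(N+1)⌋
      = ((n * 2^m + 2^m / 2 : ℕ) : ℤ) := by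
  have hB : ((2:ℝ)^N) ≠ 0 := by positivity
  have h1 : (2:ℝ)^(N+m) / (2:ℝ)^N = 2^m := by
    rw [pow_add]; field_simp
  cases m with
  | zero =>
    have h2 : (2:ℝ)^(N+0) / (2:ℝ)^(N+1) = 1/2 := by
      rw [pow_succ]; field_simp; simp
    rw [h1, h2]
    have : (n:ℝ) * 2^0 + 1/2 = 1/2 + (n:ℕ) := by push_cast; ring
    rw [this, Int.floor_add_natCast]
    norm_num
  | succ m' =>
    have h2 : (2:ℝ)^(N+(m'+1)) / (2:ℝ)^(N+1) = 2^m' := by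
      rw [show N+(m'+1) = (N+1)+m' by ring, pow_add]
      field_simp
    rw [h1, h2]
    have h3 : n * 2^(m'+1) + 2^(m'+1)/2 = n * 2^(m'+1) + 2^m' := by
      rw [pow_succ]; omega
    rw [h3]
    have : (n:ℝ) * 2^(m'+1) + 2^m' = ((n * 2^(m'+1) + 2^m' : ℕ) : ℝ) := by
      push_cast; ring
    rw [this, Int.floor_natCast]
lemma srf_aux_gauss (M : ℕ) (hM : 1 ≤ M) :
    (∑ i ∈ Finset.range M, (i:ℝ)) = ((M:ℝ) * ((M:ℝ) - 1))/2 := by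
  have h0 := Finset.sum_range_id_mul_two M
  have h1 : (((∑ i ∈ Finset.range M, i) * 2 : ℕ) : ℝ) = ((M * (M-1) : ℕ):ℝ) := by rw [h0]
  push_cast [Nat.cast_sub hM] at h1
  linarith

theorem srf_test (N m : ℕ) (hN : 1 ≤ N) :
    ((2:ℝ)^(N+m))⁻¹ * ∑ i ∈ Finset.range (2^(N+m)),
        (((2:ℝ)^N)⁻¹ * ∑ n ∈ Finset.range (2^N),
            (if (i:ℝ) * ((2:ℝ)^(N+m))⁻¹ + ((n:ℝ) + 1/2) * ((2:ℝ)^N)⁻¹ ≥ 1 then (1:ℝ) else 0)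
          - (i:ℝ) * ((2:ℝ)^(N+m))⁻¹)
      = ((2:ℝ)^(N+m))⁻¹ * (((2:ℝ)^N)⁻¹ * ∑ n ∈ Finset.range (2^N),
            ((n * 2^m + 2^m / 2 : ℕ) : ℝ))
        - (1 - ((2:ℝ)^(N+m))⁻¹)/2 := by
  have ha : ((2:ℝ)^(N+m)) ≠ 0 := by positivity
  have hb : ((2:ℝ)^N) ≠ 0 := by positivity
  have hM1 : 1 ≤ 2^(N+m) := Nat.one_le_two_pow
  have hg : (∑ i ∈ Finset.range (2^(N+m)), (i:ℝ)) * 2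
      = ((2^(N+m) : ℕ):ℝ) * (((2^(N+m) : ℕ):ℝ) - 1) := by
    have h0 := Finset.sum_range_id_mul_two (2^(N+m))
    have h1 : (((∑ i ∈ Finset.range (2^(N+m)), i) * 2 : ℕ) : ℝ)
        = ((2^(N+m) * (2^(N+m) - 1) : ℕ):ℝ) := by rw [h0]
    push_cast [Nat.cast_sub hM1] at h1
    push_cast
    linarith
  have hswap : ∑ i ∈ Finset.range (2^(N+m)), ∑ n ∈ Finset.range (2^N),
        (if (i:ℝ) * ((2:ℝ)^(N+m))⁻¹ + ((n:ℝ) + 1/2) * ((2:ℝ)^N)⁻¹ ≥ 1 then (1:ℝ) else 0)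
      = ∑ n ∈ Finset.range (2^N), ((n * 2^m + 2^m / 2 : ℕ) : ℝ) := by
    rw [Finset.sum_comm]
    refine Finset.sum_congr rfl fun n hn => ?_
    exact srf_aux_ind_sum N m n (Finset.mem_range.mp hn)
  have hMc : ((2^(N+m) : ℕ):ℝ) = (2:ℝ)^(N+m) := by push_cast; ring
  rw [hMc] at hg
  have hSi : (∑ i ∈ Finset.range (2^(N+m)), (i:ℝ))
      = ((2:ℝ)^(N+m) * ((2:ℝ)^(N+m) - 1))/2 := by linarith
  rw [Finset.sum_sub_distrib, ← Finset.mul_sum, hswap, ← Finset.sum_mul, hSi]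
  field_simp
theorem srf_grid_bias_floor_form (N D : ℕ) (hN : 1 ≤ N) (hND : N ≤ D) :
    (((2:ℝ)^D)⁻¹ * ∑ i ∈ Finset.range (2^D),
        (((2:ℝ)^N)⁻¹ * ∑ n ∈ Finset.range (2^N),
            (if (i:ℝ) * ((2:ℝ)^D)⁻¹ + ((n:ℝ) + 1/2) * ((2:ℝ)^N)⁻¹ ≥ 1 then (1:ℝ) else 0)
          - (i:ℝ) * ((2:ℝ)^D)⁻¹)
      = ((2:ℝ)^N)⁻¹ * ∑ n ∈ Finset.range (2^N),
          ((2:ℝ)^D)⁻¹ * (⌊(n:ℝ) * ((2:ℝ)^D / (2:ℝ)^N) + (2:ℝ)^D / (2:ℝ)^(N+1)⌋ : ℝ)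
        - (1 - ((2:ℝ)^D)⁻¹)/2)
    ∧
    (N < D →
      ((2:ℝ)^D)⁻¹ * ∑ i ∈ Finset.range (2^D),
        (((2:ℝ)^N)⁻¹ * ∑ n ∈ Finset.range (2^N),
            (if (i:ℝ) * ((2:ℝ)^D)⁻¹ + ((n:ℝ) + 1/2) * ((2:ℝ)^N)⁻¹ ≥ 1 then (1:ℝ) else 0)
          - (i:ℝ) * ((2:ℝ)^D)⁻¹)
      = ((2:ℝ)^(D+1))⁻¹) := by
  obtain ⟨m, rfl⟩ := Nat.exists_eq_add_of_le hND
  have hmain := srf_test N m hN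
  have ha : ((2:ℝ)^(N+m)) ≠ 0 := by positivity
  have hb : ((2:ℝ)^N) ≠ 0 := by positivity
  constructor
  · rw [hmain]
    have hfl : ∑ n ∈ Finset.range (2^N),
        ((2:ℝ)^(N+m))⁻¹ * (⌊(n:ℝ) * ((2:ℝ)^(N+m) / (2:ℝ)^N) + (2:ℝ)^(N+m) / (2:ℝ)^(N+1)⌋ : ℝ)
        = ((2:ℝ)^(N+m))⁻¹ * ∑ n ∈ Finset.range (2^N), ((n * 2^m + 2^m / 2 : ℕ) : ℝ) := by
      rw [Finset.mul_sum]
      refine Finset.sum_congr rfl fun n _ => ?_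
      rw [srf_aux_floor N m n, Int.cast_natCast]
    rw [hfl]
    ring
  · intro hlt
    have hm : 1 ≤ m := by omega
    obtain ⟨m', rfl⟩ : ∃ m', m = m' + 1 := ⟨m - 1, by omega⟩
    rw [hmain]
    have hK : ∀ n : ℕ, ((n * 2^(m'+1) + 2^(m'+1) / 2 : ℕ) : ℝ) = (n:ℝ) * 2^(m'+1) + 2^m' := by
      intro n
      rw [show 2^(m'+1)/2 = 2^m' from by rw [pow_succ]; omega]
      push_cast
      ring
    have hN1 : 1 ≤ 2^N := Nat.one_le_two_pow
    have hg := srf_aux_gauss (2^N) hN1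
    have hSK : ∑ n ∈ Finset.range (2^N), ((n * 2^(m'+1) + 2^(m'+1) / 2 : ℕ) : ℝ)
        = (((2^N : ℕ):ℝ) * (((2^N : ℕ):ℝ) - 1))/2 * 2^(m'+1) + ((2^N : ℕ):ℝ) * 2^m' := by
      rw [Finset.sum_congr rfl (fun n _ => hK n), Finset.sum_add_distrib, ← Finset.sum_mul, hg,
        Finset.sum_const, Finset.card_range, nsmul_eq_mul]
    rw [hSK]
    have hc : ((2^N : ℕ):ℝ) = (2:ℝ)^N := by push_cast; ring
    rw [hc,
      show (2:ℝ)^(N+(m'+1)) = 2^N * 2^m' * 2 from by rw [pow_add, pow_succ]; ring,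
      show (2:ℝ)^(N+(m'+1)+1) = 2^N * 2^m' * 4 from by rw [pow_succ, pow_add, pow_succ]; ring,
      show (2:ℝ)^(m'+1) = 2^m' * 2 from by rw [pow_succ]]
    have hy : ((2:ℝ)^m') ≠ 0 := by positivity
    field_simp
    ring
end
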